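/- Let δ, α be integers with δ ≥ 1 and α ≥ 1, and let λ ∈ ℝ with λ > 1. Then Σ_{ℓ=0}^{2n} (ℓ/(2n))^α · ((δ + ⌈n − ℓ/2⌉)/n)^α · λ^{δ + ⌈ℓ/2⌉ − n} → 0 as n → ∞. In particular, there is no constant c > 0 such that c < Σ_{ℓ=0}^{2n} (ℓ/(2n))^α · ((δ + ⌈n − ℓ/2⌉)/n)^α · λ^{δ + ⌈ℓ/2⌉ − n} for all n ≥ 1. -/

import Mathlib

open Filter Topology

/-- ceiling of a natural number over 2 -/
lemma ceil_nat_div_two (j : ℕ) : ⌈(j : ℝ) / 2⌉ = ((j + 1) / 2 : ℕ) := by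
  rcases Nat.even_or_odd j with ⟨k, hk⟩ | ⟨k, hk⟩ <;> subst hk
  · have h : ((k + k : ℕ) : ℝ) / 2 = ((k : ℤ) : ℝ) := by push_cast; ring
    rw [h, Int.ceil_intCast]
    have : (k + k + 1) / 2 = k := by omega
    rw [this]
  · have h : ((2 * k + 1 : ℕ) : ℝ) / 2 = (1 / 2 : ℝ) + ((k : ℤ) : ℝ) := by push_cast; ring
    rw [h, Int.ceil_add_intCast]
    have h2 : ⌈(1 / 2 : ℝ)⌉ = 1 := by
      rw [Int.ceil_eq_iff] <;> norm_num
    have : (2 * k + 1 + 1) / 2 = k + 1 := by omega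
    rw [h2, this]
    push_cast; ring

lemma half_index_sum (g : ℕ → ℝ) (hg : ∀ m, 0 ≤ g m) (n : ℕ) :
    ∑ j ∈ Finset.range (2 * n + 1), g (j / 2)
      ≤ 2 * ∑ m ∈ Finset.range (n + 1), g m - g n := by
  induction n with
  | zero => simp; linarith [hg 0]
  | succ n ih =>
    have h1 : 2 * (n + 1) + 1 = (2 * n + 1) + 1 + 1 := by ring
    rw [h1, Finset.sum_range_succ, Finset.sum_range_succ,
      Finset.sum_range_succ (f := g) (n := n + 1)]
    have e1 : (2 * n + 1) / 2 = n := by omega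
    have e2 : (2 * n + 1 + 1) / 2 = n + 1 := by omega
    rw [e1, e2]
    linarith [hg n, hg (n + 1)]

/-- For integers `δ ≥ 1`, `α ≥ 1` and real `λ > 1`, the sum
`Σ_{ℓ=0}^{2n} (ℓ/(2n))^α ((δ + ⌈n − ℓ/2⌉)/n)^α λ^{δ+⌈ℓ/2⌉−n}` tends to `0` as `n → ∞`;
in particular it is not bounded away from `0` by any constant `c > 0` for all `n ≥ 1`. -/
theorem sum_tendsto_zero_of_alpha_pos (δ α : ℕ) (hδ : 1 ≤ δ) (hα : 1 ≤ α)
    (lam : ℝ) (hlam : 1 < lam) :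
    Tendsto
        (fun n : ℕ =>
          ∑ ℓ ∈ Finset.range (2 * n + 1),
            ((ℓ : ℝ) / (2 * n)) ^ α *
              ((((δ : ℤ) + ⌈(n : ℝ) - (ℓ : ℝ) / 2⌉ : ℤ) : ℝ) / (n : ℝ)) ^ α *
              lam ^ ((δ : ℤ) + ⌈(ℓ : ℝ) / 2⌉ - (n : ℤ)))
        atTop (𝓝 0) ∧
      ¬ ∃ c : ℝ, 0 < c ∧ ∀ n : ℕ, 1 ≤ n →
        c < ∑ ℓ ∈ Finset.range (2 * n + 1),
            ((ℓ : ℝ) / (2 * n)) ^ α *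
              ((((δ : ℤ) + ⌈(n : ℝ) - (ℓ : ℝ) / 2⌉ : ℤ) : ℝ) / (n : ℝ)) ^ α *
              lam ^ ((δ : ℤ) + ⌈(ℓ : ℝ) / 2⌉ - (n : ℤ)) := by
  have hlam0 : (0 : ℝ) < lam := lt_trans one_pos hlam
  set F : ℕ → ℝ := fun n =>
    ∑ ℓ ∈ Finset.range (2 * n + 1),
      ((ℓ : ℝ) / (2 * n)) ^ α *
        ((((δ : ℤ) + ⌈(n : ℝ) - (ℓ : ℝ) / 2⌉ : ℤ) : ℝ) / (n : ℝ)) ^ α *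
        lam ^ ((δ : ℤ) + ⌈(ℓ : ℝ) / 2⌉ - (n : ℤ)) with hF
  -- each term is nonnegative
  have hFnonneg : ∀ n, 0 ≤ F n := by
    intro n
    apply Finset.sum_nonneg
    intro ℓ hℓ
    rw [Finset.mem_range] at hℓ
    have hℓ' : ℓ ≤ 2 * n := by omega
    have h1 : (0 : ℝ) ≤ ((ℓ : ℝ) / (2 * n)) ^ α :=
      pow_nonneg (div_nonneg (by positivity) (by positivity)) α
    have hub : (0 : ℤ) ≤ (δ : ℤ) + ⌈(n : ℝ) - (ℓ : ℝ) / 2⌉ := by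
      have : (0 : ℝ) ≤ (n : ℝ) - (ℓ : ℝ) / 2 := by
        have : (ℓ : ℝ) ≤ 2 * n := by exact_mod_cast hℓ'
        linarith
      have := Int.ceil_nonneg this
      omega
    have h2 : (0 : ℝ) ≤ ((((δ : ℤ) + ⌈(n : ℝ) - (ℓ : ℝ) / 2⌉ : ℤ) : ℝ) / (n : ℝ)) ^ α :=
      pow_nonneg (div_nonneg (by exact_mod_cast hub) (by positivity)) α
    have h3 : (0 : ℝ) < lam ^ ((δ : ℤ) + ⌈(ℓ : ℝ) / 2⌉ - (n : ℤ)) := zpow_pos hlam0 _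
    positivity
  -- geometric-type series
  set r : ℝ := lam⁻¹ with hr
  have hr0 : 0 ≤ r := by positivity
  have hr1 : r < 1 := inv_lt_one_of_one_lt₀ hlam
  set g : ℕ → ℝ := fun m => ((δ : ℝ) + m + 1) * r ^ m with hg
  have hgnonneg : ∀ m, 0 ≤ g m := by
    intro m; apply mul_nonneg; · positivity
    · positivity
  have hgsum : Summable g := by
    have h1 : Summable (fun m : ℕ => ((δ : ℝ) + 1) * r ^ m) :=
      (summable_geometric_of_lt_one hr0 hr1).mul_left _
    have h2 : Summable (fun m : ℕ => (m : ℝ) * r ^ m) := by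
      have := summable_pow_mul_geometric_of_norm_lt_one (R := ℝ) 1
        (r := r) (by rw [Real.norm_eq_abs, abs_of_nonneg hr0]; exact hr1)
      simpa using this
    have := h1.add h2
    apply this.congr
    intro m; simp [g]; ring
  set S : ℝ := ∑' m, g m with hS
  have hSnonneg : 0 ≤ S := tsum_nonneg hgnonneg
  set C : ℝ := ((δ : ℝ) + 2) ^ (α - 1) * lam ^ δ with hC
  have hCnonneg : 0 ≤ C := by positivity
  -- main bound
  have key : ∀ n : ℕ, 1 ≤ n → F n ≤ 2 * C * S / n := by
    intro n hn
    have hnR : (0 : ℝ) < n := by exact_mod_cast hn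
    set f : ℕ → ℝ := fun ℓ =>
      ((ℓ : ℝ) / (2 * n)) ^ α *
        ((((δ : ℤ) + ⌈(n : ℝ) - (ℓ : ℝ) / 2⌉ : ℤ) : ℝ) / (n : ℝ)) ^ α *
        lam ^ ((δ : ℤ) + ⌈(ℓ : ℝ) / 2⌉ - (n : ℤ)) with hf
    have reflect := Finset.sum_range_reflect f (2 * n + 1)
    have hFn : F n = ∑ j ∈ Finset.range (2 * n + 1), f (2 * n + 1 - 1 - j) := by
      rw [hF]; exact reflect.symm
    rw [hFn]
    have termbd : ∀ j ∈ Finset.range (2 * n + 1),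
        f (2 * n + 1 - 1 - j) ≤ C / n * g (j / 2) := by
      intro j hj
      rw [Finset.mem_range] at hj
      have hj' : j ≤ 2 * n := by omega
      have hidx : 2 * n + 1 - 1 - j = 2 * n - j := by omega
      rw [hidx, hf]
      simp only
      have hcast : ((2 * n - j : ℕ) : ℝ) = 2 * n - j := by
        push_cast [hj']; ring
      -- ceiling computations
      have e1 : (n : ℝ) - ((2 * n - j : ℕ) : ℝ) / 2 = (j : ℝ) / 2 := by
        rw [hcast]; ring
      have c1 : ⌈(n : ℝ) - ((2 * n - j : ℕ) : ℝ) / 2⌉ = ((j + 1) / 2 : ℕ) := by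
        rw [e1, ceil_nat_div_two]
      have c2 : ⌈((2 * n - j : ℕ) : ℝ) / 2⌉ = ((n - j / 2 : ℕ) : ℤ) := by
        rw [ceil_nat_div_two]
        congr 1
        omega
      rw [c1, c2]
      obtain ⟨k, hk⟩ : ∃ k, (j + 1) / 2 = k := ⟨_, rfl⟩
      obtain ⟨m, hm⟩ : ∃ m, j / 2 = m := ⟨_, rfl⟩
      rw [hk, hm]
      have hkm : k ≤ m + 1 := by omega
      have hmn : m ≤ n := by omega
      have hkn : k ≤ n := by omega
      have hexp : (δ : ℤ) + ((n - m : ℕ) : ℤ) - (n : ℤ) = (δ : ℤ) - (m : ℤ) := by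
        have : m ≤ n := hmn
        push_cast [this]
        ring
      rw [hexp]
      have hzp : lam ^ ((δ : ℤ) - (m : ℤ)) = lam ^ δ * r ^ m := by
        rw [zpow_sub₀ (ne_of_gt hlam0), zpow_natCast, zpow_natCast, hr, div_eq_mul_inv,
          inv_pow]
      rw [hzp]
      -- bound factor 1
      have hA : (((2 * n - j : ℕ) : ℝ) / (2 * n)) ^ α ≤ 1 := by
        apply pow_le_one₀ (div_nonneg (by positivity) (by positivity))
        rw [div_le_one (by positivity), hcast]
        have : (0:ℝ) ≤ j := by positivity
        linarith
      -- bound factor 2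
      set b : ℝ := (((δ : ℤ) + (k : ℕ) : ℤ) : ℝ) / n with hb
      have hbeq : b = ((δ : ℝ) + k) / n := by rw [hb]; push_cast; ring
      have hbnn : 0 ≤ b := by rw [hbeq]; positivity
      have hble : b ≤ (δ : ℝ) + 2 := by
        rw [hbeq, div_le_iff₀ hnR]
        have h1 : (k : ℝ) ≤ n := by exact_mod_cast hkn
        have h2 : (1 : ℝ) ≤ n := by exact_mod_cast hn
        have h3 : (0 : ℝ) ≤ (δ : ℝ) := Nat.cast_nonneg δ
        nlinarith
      have hble2 : b ≤ ((δ : ℝ) + m + 1) / n := by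
        rw [hbeq]
        have : (k : ℝ) ≤ (m : ℝ) + 1 := by exact_mod_cast hkm
        exact div_le_div_of_nonneg_right (by linarith) hnR.le
      have hBb : b ^ α ≤ ((δ : ℝ) + 2) ^ (α - 1) * b := by
        calc b ^ α = b ^ (α - 1) * b := by
              rw [← pow_succ]; congr 1; omega
          _ ≤ ((δ : ℝ) + 2) ^ (α - 1) * b :=
              mul_le_mul_of_nonneg_right (pow_le_pow_left₀ hbnn hble _) hbnn
      have hB2 : ((δ : ℝ) + 2) ^ (α - 1) * b
          ≤ ((δ : ℝ) + 2) ^ (α - 1) * (((δ : ℝ) + m + 1) / n) :=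
        mul_le_mul_of_nonneg_left hble2 (by positivity)
      have hP : (0:ℝ) ≤ lam ^ δ * r ^ m := by positivity
      calc (((2 * n - j : ℕ) : ℝ) / (2 * n)) ^ α * b ^ α * (lam ^ δ * r ^ m)
          ≤ 1 * (((δ : ℝ) + 2) ^ (α - 1) * (((δ : ℝ) + m + 1) / n)) *
            (lam ^ δ * r ^ m) := by
            apply mul_le_mul_of_nonneg_right _ hP
            exact mul_le_mul hA (hBb.trans hB2) (pow_nonneg hbnn _) zero_le_one
        _ = C / n * g m := by
            rw [hC]
            show _ = _ / _ * (((δ : ℝ) + m + 1) * r ^ m)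
            field_simp
    calc ∑ j ∈ Finset.range (2 * n + 1), f (2 * n + 1 - 1 - j)
          ≤ ∑ j ∈ Finset.range (2 * n + 1), C / n * g (j / 2) :=
          Finset.sum_le_sum termbd
      _ = C / n * ∑ j ∈ Finset.range (2 * n + 1), g (j / 2) := by rw [Finset.mul_sum]
      _ ≤ C / n * (2 * S) := by
          apply mul_le_mul_of_nonneg_left _ (by positivity)
          have h1 := half_index_sum g hgnonneg n
          have h2 : ∑ m ∈ Finset.range (n + 1), g m ≤ S :=
            Summable.sum_le_tsum _ (fun m _ => hgnonneg m) hgsum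
          nlinarith [hgnonneg n]
      _ = 2 * C * S / n := by ring
  -- the tendsto statement
  have htend : Tendsto F atTop (𝓝 0) := by
    have hub : Tendsto (fun n : ℕ => 2 * C * S / n) atTop (𝓝 0) :=
      tendsto_const_div_atTop_nhds_zero_nat _
    apply tendsto_of_tendsto_of_tendsto_of_le_of_le' tendsto_const_nhds hub
    · exact Eventually.of_forall hFnonneg
    · filter_upwards [eventually_ge_atTop 1] with n hn using key n hn
  refine ⟨htend, ?_⟩
  rintro ⟨c, hc, hlt⟩
  have := (htend.eventually (gt_mem_nhds hc)).and (eventually_ge_atTop 1)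
  obtain ⟨n, h1, h2⟩ := this.exists
  exact absurd (hlt n h2) (not_lt.mpr (le_of_lt h1))
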